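/- Let J ⊆ {1,...,n} with partition (J_+, J_−), define a_j > 0 for j ∈ J_+ and a_j < 0 for j ∈ J_−. Then the inequality ∑_{j∈J} a_j x_j ≥ α holds for all full circuits x if and only if it holds for all J-circuits that are undominated with respect to (J_+, J_−). -/

import Mathlib

/-- A circuit on `{1,...,n}`: a permutation of `Fin n` that is a single `n`-cycle. -/
def IsCircuitPerm {n : ℕ} (σ : Equiv.Perm (Fin n)) : Prop :=
  σ.IsCycle ∧ σ.support = Finset.univ

/-- A circuit point on values `v`: `x i = v (σ i)` for some single-`n`-cycle permutation `σ`. -/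
def IsCircuitPt {n : ℕ} (v : Fin n → ℝ) (x : Fin n → ℝ) : Prop :=
  ∃ σ : Equiv.Perm (Fin n), IsCircuitPerm σ ∧ ∀ i, x i = v (σ i)

/-- The partial assignment `f` on `J` creates no cycle. -/
def NoCycleOn {n : ℕ} (f : Fin n → Fin n) (J : Finset (Fin n)) : Prop :=
  ¬ ∃ j ∈ J, ∃ k, 0 < k ∧ (∀ t < k, f^[t] j ∈ J) ∧ f^[k] j = j

/-- A `J`-circuit: an injective, cycle-free partial assignment on `J`
(index `j` receives value `v_{f j}`). -/
def IsJCircuit {n : ℕ} (J : Finset (Fin n)) (f : Fin n → Fin n) : Prop :=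
  Set.InjOn f J ∧ NoCycleOn f J

/-- `g` dominates `f` with respect to the partition `(J₊, J₋)`: `g` differs from `f`
on `J`, with smaller-or-equal values on `J₊` and larger-or-equal values on `J₋`. -/
def Dominates {n : ℕ} (v : Fin n → ℝ) (Jp Jm : Finset (Fin n)) (g f : Fin n → Fin n) : Prop :=
  (∃ j ∈ Jp ∪ Jm, g j ≠ f j) ∧ (∀ j ∈ Jp, v (g j) ≤ v (f j)) ∧ (∀ j ∈ Jm, v (f j) ≤ v (g j))

-- ===== auxiliary lemmas =====

lemma iter_congr {α : Type*} (f g : α → α) (j : α) (k : ℕ)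
    (h : ∀ t < k, g (f^[t] j) = f (f^[t] j)) : g^[k] j = f^[k] j := by
  induction k with
  | zero => rfl
  | succ k ih =>
    rw [Function.iterate_succ_apply', Function.iterate_succ_apply',
      ih (fun t ht => h t (Nat.lt_succ_of_lt ht)), h k (Nat.lt_succ_self k)]

lemma exists_exit {n : ℕ} {J : Finset (Fin n)} {f : Fin n → Fin n}
    (hnc : NoCycleOn f J) (y : Fin n) : ∃ t, f^[t] y ∉ J := by
  by_contra h
  push_neg at h
  obtain ⟨s, t, hne, heq⟩ := Finite.exists_ne_map_eq_of_infinite (fun t : ℕ => f^[t] y)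

  wlog hst : s < t generalizing s t
  · exact this t s hne.symm heq.symm (by omega)
  refine hnc ⟨f^[s] y, h s, t - s, by omega,
    fun u _ => by rw [← Function.iterate_add_apply]; exact h _, ?_⟩
  rw [← Function.iterate_add_apply, show t - s + s = t by omega]
  exact heq.symm

lemma iterate_mod {α : Type*} (f : α → α) {j : α} {k : ℕ} 
    (hfix : f^[k] j = j) (i : ℕ) : f^[i] j = f^[i % k] j := by
  conv_lhs => rw [← Nat.mod_add_div i k]
  rw [Function.iterate_add_apply, Function.iterate_mul]
  congr 1
  exact Function.iterate_fixed hfix _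


lemma path_inj {n : ℕ} {J : Finset (Fin n)} {f : Fin n → Fin n}
    (hinj : Set.InjOn f J) {y₁ y₂ : Fin n}
    (hy₁ : y₁ ∉ J.image f) (hy₂ : y₂ ∉ J.image f) :
    ∀ k₁ k₂ : ℕ, (∀ t < k₁, f^[t] y₁ ∈ J) → (∀ t < k₂, f^[t] y₂ ∈ J) →
    f^[k₁] y₁ = f^[k₂] y₂ → y₁ = y₂ := by
  intro k₁
  induction k₁ with
  | zero =>
    intro k₂ _ h₂ heq
    cases k₂ with
    | zero => exact heq
    | succ m =>
      exfalso
      apply hy₁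
      rw [Finset.mem_image]
      exact ⟨f^[m] y₂, h₂ m (Nat.lt_succ_self m),
        (Function.iterate_succ_apply' f m y₂).symm.trans heq.symm⟩
  | succ m ih =>
    intro k₂ h₁ h₂ heq
    cases k₂ with
    | zero =>
      exfalso
      apply hy₂
      rw [Finset.mem_image]
      exact ⟨f^[m] y₁, h₁ m (Nat.lt_succ_self m),
        (Function.iterate_succ_apply' f m y₁).symm.trans heq⟩
    | succ m₂ =>
      rw [Function.iterate_succ_apply', Function.iterate_succ_apply'] at heq
      have := hinj (h₁ m (Nat.lt_succ_self m)) (h₂ m₂ (Nat.lt_succ_self m₂)) heq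
      exact ih m₂ (fun t ht => h₁ t (Nat.lt_succ_of_lt ht))
        (fun t ht => h₂ t (Nat.lt_succ_of_lt ht)) this


def BadPath {n : ℕ} (J : Finset (Fin n)) (f : Fin n → Fin n) (j₀ y : Fin n) : Prop :=
  ∃ k, (∀ t < k, f^[t] y ∈ J) ∧ f^[k] y = j₀

lemma extend_step {n : ℕ} {J : Finset (Fin n)} {f : Fin n → Fin n}
    (hf : IsJCircuit J f) {j₀ : Fin n} (hj₀ : j₀ ∉ J) (hcard : J.card + 2 ≤ n) :
    ∃ y : Fin n, IsJCircuit (insert j₀ J) (Function.update f j₀ y) := by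
  classical
  obtain ⟨hinj, hnc⟩ := hf
  -- candidates
  set C : Finset (Fin n) := Finset.univ \ J.image f with hC
  have hCcard : 2 ≤ C.card := by
    have h1 : (J.image f).card = J.card := Finset.card_image_of_injOn hinj
    have h2 : C.card = n - (J.image f).card := by
      rw [hC, Finset.card_sdiff_of_subset (Finset.subset_univ _), Finset.card_univ, Fintype.card_fin]
    omega
  -- at most one bad candidate
  have hbad1 : (C.filter (fun y => BadPath J f j₀ y)).card ≤ 1 := by
    rw [Finset.card_le_one]
    intro y₁ hy₁ y₂ hy₂
    rw [Finset.mem_filter] at hy₁ hy₂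
    obtain ⟨hy₁C, k₁, h₁, e₁⟩ := hy₁
    obtain ⟨hy₂C, k₂, h₂, e₂⟩ := hy₂
    rw [hC, Finset.mem_sdiff] at hy₁C hy₂C
    exact path_inj hinj hy₁C.2 hy₂C.2 k₁ k₂ h₁ h₂ (e₁.trans e₂.symm)
  -- pick good y
  have : (C \ C.filter (fun y => BadPath J f j₀ y)).Nonempty := by
    rw [← Finset.card_pos, Finset.card_sdiff_of_subset (Finset.filter_subset _ _)]
    omega
  obtain ⟨y, hy⟩ := this
  rw [Finset.mem_sdiff, Finset.mem_filter] at hy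
  have hyC : y ∈ C := hy.1
  have hygood : ¬ BadPath J f j₀ y := fun hb => hy.2 ⟨hy.1, hb⟩
  rw [hC, Finset.mem_sdiff] at hyC
  have hyim : y ∉ J.image f := hyC.2
  refine ⟨y, ?_, ?_⟩
  · -- injectivity
    intro a ha b hb hab
    simp only [Finset.coe_insert, Set.mem_insert_iff, Finset.mem_coe] at ha hb
    rcases ha with rfl | ha <;> rcases hb with rfl | hb
    · rfl
    · exfalso
      rw [Function.update_self, Function.update_of_ne (fun h : b = a => hj₀ (h ▸ hb))] at hab
      exact hyim (Finset.mem_image.2 ⟨b, hb, hab.symm⟩)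
    · exfalso
      rw [Function.update_self, Function.update_of_ne (fun h : a = b => hj₀ (h ▸ ha))] at hab
      exact hyim (Finset.mem_image.2 ⟨a, ha, hab⟩)
    · rw [Function.update_of_ne (fun h : a = j₀ => hj₀ (h ▸ ha)),
        Function.update_of_ne (fun h : b = j₀ => hj₀ (h ▸ hb))] at hab
      exact hinj ha hb hab
  · -- no cycle
    set g := Function.update f j₀ y with hg
    have hgJ : ∀ z ∈ J, g z = f z := fun z hz =>
      Function.update_of_ne (fun h : z = j₀ => hj₀ (h ▸ hz)) _ _
    rintro ⟨j, hj, k, hk, hiter, hfix⟩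
    by_cases hpass : ∃ t < k, g^[t] j = j₀
    · -- cycle passes through j₀
      obtain ⟨t₀, ht₀, he₀⟩ := hpass
      have hfix0 : g^[k] j₀ = j₀ := by
        rw [← he₀, ← Function.iterate_add_apply, Nat.add_comm,
          Function.iterate_add_apply, hfix, he₀]
      have hall : ∀ t, g^[t] j₀ ∈ insert j₀ J := by
        intro t
        have : g^[t] j₀ = g^[(t + t₀) % k] j := by
          rw [← he₀, ← Function.iterate_add_apply, iterate_mod g hfix]
        rw [this]
        exact hiter _ (Nat.mod_lt _ hk)
      -- minimal return time
      have hex : ∃ m, 0 < m ∧ g^[m] j₀ = j₀ := ⟨k, hk, hfix0⟩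
      set k' := Nat.find hex with hk'
      obtain ⟨hk'pos, hk'fix⟩ := Nat.find_spec hex
      have hmin : ∀ t, 0 < t → t < k' → g^[t] j₀ ≠ j₀ := by
        intro t ht htk h
        exact Nat.find_min hex htk ⟨ht, h⟩
      have hmemJ : ∀ t, 1 ≤ t → t < k' → g^[t] j₀ ∈ J := by
        intro t h1 h2
        have := hall t
        rw [Finset.mem_insert] at this
        rcases this with h | h
        · exact absurd h (hmin t h1 h2)
        · exact h
      -- the path from y
      have hy0 : g j₀ = y := Function.update_self _ _ _
      have hpath : ∀ t, t ≤ k' - 1 → f^[t] y = g^[t + 1] j₀ := by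
        intro t
        induction t with
        | zero => intro _; simpa using hy0.symm
        | succ m ih =>
          intro hm
          have hm' : m ≤ k' - 1 := by omega
          rw [Function.iterate_succ_apply', ih hm']
          have hmem : g^[m + 1] j₀ ∈ J := hmemJ (m + 1) (by omega) (by omega)
          rw [← hgJ _ hmem]
          exact (Function.iterate_succ_apply' g (m + 1) j₀).symm
      apply hygood
      refine ⟨k' - 1, fun t ht => ?_, ?_⟩
      · rw [hpath t (by omega)]
        exact hmemJ (t + 1) (by omega) (by omega)
      · rw [hpath (k' - 1) le_rfl, show k' - 1 + 1 = k' by omega]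
        exact hk'fix
    · -- cycle stays in J: contradiction with NoCycleOn f J
      push_neg at hpass
      have hmemJ : ∀ t < k, g^[t] j ∈ J := by
        intro t ht
        have := hiter t ht
        rw [Finset.mem_insert] at this
        rcases this with h | h
        · exact absurd h (hpass t ht)
        · exact h
      have heqf : ∀ t, t ≤ k → g^[t] j = f^[t] j := by
        intro t
        induction t with
        | zero => intro _; rfl
        | succ m ih =>
          intro hm
          rw [Function.iterate_succ_apply', Function.iterate_succ_apply',
            ← ih (by omega), hgJ _ (hmemJ m (by omega))]
      exact hnc ⟨j, by
        have := hmemJ 0 hk; simpa using this, k, hk,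
        fun t ht => (heqf t ht.le) ▸ hmemJ t ht,
        (heqf k le_rfl) ▸ hfix⟩


lemma circuit_restrict {n : ℕ} {σ : Equiv.Perm (Fin n)} (hσ : IsCircuitPerm σ)
    {J : Finset (Fin n)} (hJ : J ≠ Finset.univ) : IsJCircuit J ⇑σ := by
  refine ⟨σ.injective.injOn, ?_⟩
  rintro ⟨j, hj, k, hk, hiter, hfix⟩
  apply hJ
  apply Finset.eq_univ_of_forall
  intro z
  have hsupp : ∀ w : Fin n, σ w ≠ w := by
    intro w
    have : w ∈ σ.support := hσ.2 ▸ Finset.mem_univ w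
    exact Equiv.Perm.mem_support.1 this
  obtain ⟨i, hi⟩ := hσ.1.exists_pow_eq (hsupp j) (hsupp z)
  have h2 : σ^[i] j = z := by rw [← hi]; rfl
  rw [iterate_mod ⇑σ hfix i] at h2
  rw [← h2]
  exact hiter _ (Nat.mod_lt _ hk)

lemma base_extend {n : ℕ} (hn : 2 ≤ n) {J : Finset (Fin n)} {f : Fin n → Fin n}
    (hf : IsJCircuit J f) (hcard : J.card + 1 = n) :
    ∃ σ : Equiv.Perm (Fin n), IsCircuitPerm σ ∧ ∀ j ∈ J, σ j = f j := by
  classical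
  obtain ⟨hinj, hnc⟩ := hf
  have hJc : (Finset.univ \ J).card = 1 := by
    rw [Finset.card_sdiff_of_subset (Finset.subset_univ _), Finset.card_univ, Fintype.card_fin]; omega
  obtain ⟨j₀, hj₀⟩ := Finset.card_eq_one.1 hJc
  have hnotJ : ∀ a : Fin n, a ∉ J → a = j₀ := by
    intro a ha
    have : a ∈ ({j₀} : Finset (Fin n)) :=
      hj₀ ▸ Finset.mem_sdiff.2 ⟨Finset.mem_univ a, ha⟩
    exact Finset.mem_singleton.1 this
  have hj₀mem : j₀ ∉ J := by
    have : j₀ ∈ Finset.univ \ J := hj₀ ▸ Finset.mem_singleton_self j₀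
    exact (Finset.mem_sdiff.1 this).2
  have himc : (Finset.univ \ J.image f).card = 1 := by
    rw [Finset.card_sdiff_of_subset (Finset.subset_univ _), Finset.card_univ, Fintype.card_fin,
      Finset.card_image_of_injOn hinj]; omega
  obtain ⟨y₀, hy₀⟩ := Finset.card_eq_one.1 himc
  have hy₀mem : y₀ ∉ J.image f := by
    have : y₀ ∈ Finset.univ \ J.image f := hy₀ ▸ Finset.mem_singleton_self y₀
    exact (Finset.mem_sdiff.1 this).2
  set g := Function.update f j₀ y₀ with hg
  have hgJ : ∀ z ∈ J, g z = f z := fun z hz =>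
    Function.update_of_ne (fun h : z = j₀ => hj₀mem (h ▸ hz)) _ _
  have hginj : Function.Injective g := by
    intro a b hab
    by_cases ha : a ∈ J <;> by_cases hb : b ∈ J
    · rw [hgJ a ha, hgJ b hb] at hab; exact hinj ha hb hab
    · rw [hnotJ b hb] at hab ⊢
      rw [hgJ a ha, hg, Function.update_self] at hab
      exact (hy₀mem (Finset.mem_image.2 ⟨a, ha, hab⟩)).elim
    · rw [hnotJ a ha] at hab ⊢
      rw [hgJ b hb, hg, Function.update_self] at hab
      exact (hy₀mem (Finset.mem_image.2 ⟨b, hb, hab.symm⟩)).elim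
    · rw [hnotJ a ha, hnotJ b hb]
  set σ : Equiv.Perm (Fin n) := Equiv.ofBijective g (Finite.injective_iff_bijective.1 hginj)
    with hσdef
  have hσapp : ∀ z, σ z = g z := fun z => rfl
  have hσJ : ∀ j ∈ J, σ j = f j := fun j hj => (hσapp j).trans (hgJ j hj)
  -- periodicity
  have hord : 0 < orderOf σ := orderOf_pos σ
  have hper : ∀ z : Fin n, σ^[orderOf σ] z = z := by
    intro z
    have : σ ^ orderOf σ = 1 := pow_orderOf_eq_one σ
    have h2 : (σ ^ orderOf σ) z = z := by rw [this]; rfl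
    exact h2
  -- every orbit hits j₀
  have horbit : ∀ z : Fin n, ∃ t : ℕ, σ^[t] z = j₀ := by
    intro z
    by_contra hno
    push_neg at hno
    have hallJ : ∀ t, σ^[t] z ∈ J := by
      intro t
      by_contra hmem
      exact hno t (hnotJ _ hmem)
    have heqf : ∀ t, σ^[t] z = f^[t] z := by
      intro t
      induction t with
      | zero => rfl
      | succ m ih =>
        rw [Function.iterate_succ_apply', Function.iterate_succ_apply', ← ih]
        exact hσJ _ (hallJ m)
    refine hnc ⟨z, by simpa using hallJ 0, orderOf σ, hord,
      fun t _ => (heqf t) ▸ hallJ t, (heqf (orderOf σ)) ▸ hper z⟩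
  -- no fixed points
  have hnofix : ∀ w : Fin n, σ w ≠ w := by
    intro w hw
    -- a fixed point must be j₀
    have hwj : w = j₀ := by
      by_contra hne
      obtain ⟨t, ht⟩ := horbit w
      have : σ^[t] w = w := Function.iterate_fixed hw t
      exact hne (this ▸ ht)
    rw [hwj] at hw
    -- then the orbit of some z ∈ J reaches j₀, contradiction with injectivity
    have hJne : J.Nonempty := by
      rw [← Finset.card_pos]; omega
    obtain ⟨z, hz⟩ := hJne
    have hex : ∃ t : ℕ, σ^[t] z = j₀ := horbit z
    set t := Nat.find hex with hts
    have htspec : σ^[t] z = j₀ := Nat.find_spec hex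
    have htpos : 0 < t := by
      rcases Nat.eq_zero_or_pos t with h | h
      · exfalso
        have : z = j₀ := by rw [← htspec, h]; rfl
        exact hj₀mem (this ▸ hz)
      · exact h
    have hprev : σ (σ^[t - 1] z) = j₀ := by
      have := (Function.iterate_succ_apply' (⇑σ) (t - 1) z).symm
      rw [Nat.succ_eq_add_one, show t - 1 + 1 = t by omega] at this
      rw [this]; exact htspec
    have : σ^[t - 1] z = j₀ := σ.injective (hprev.trans hw.symm)
    exact Nat.find_min hex (by omega : t - 1 < t) this
  -- σ is a circuit perm
  have hsupp : σ.support = Finset.univ :=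
    Finset.eq_univ_of_forall fun w => Equiv.Perm.mem_support.2 (hnofix w)
  refine ⟨σ, ⟨⟨j₀, hnofix j₀, ?_⟩, hsupp⟩, hσJ⟩
  intro y _
  obtain ⟨t, ht⟩ := horbit y
  refine (Equiv.Perm.SameCycle.symm ⟨(t : ℤ), ?_⟩)
  rw [zpow_natCast]
  exact ht


lemma full_extend {n : ℕ} (hn : 2 ≤ n) :
    ∀ k, 1 ≤ k → ∀ (J : Finset (Fin n)) (f : Fin n → Fin n), IsJCircuit J f →
      J.card + k = n → ∃ σ : Equiv.Perm (Fin n), IsCircuitPerm σ ∧ ∀ j ∈ J, σ j = f j := by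
  intro k
  induction k with
  | zero => omega
  | succ k ih =>
    intro _ J f hf hcard
    rcases Nat.eq_zero_or_pos k with hk | hk
    · subst hk
      exact base_extend hn hf (by omega)
    · -- extend J by one element
      have hJne : (Finset.univ \ J).Nonempty := by
        rw [← Finset.card_pos, Finset.card_sdiff_of_subset (Finset.subset_univ _),
          Finset.card_univ, Fintype.card_fin]
        omega
      obtain ⟨j₀, hj₀⟩ := hJne
      have hj₀J : j₀ ∉ J := (Finset.mem_sdiff.1 hj₀).2
      obtain ⟨y, hy⟩ := extend_step hf hj₀J (by omega)
      obtain ⟨σ, hσ, hσeq⟩ := ih hk (insert j₀ J) _ hy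
        (by rw [Finset.card_insert_of_notMem hj₀J]; omega)
      refine ⟨σ, hσ, fun j hj => ?_⟩
      rw [hσeq j (Finset.mem_insert_of_mem hj)]
      exact Function.update_of_ne (fun h : j = j₀ => hj₀J (h ▸ hj)) _ _

/-- The inequality `∑_{j∈J} a_j x_j ≥ α` (with `a_j > 0` on `J₊` and `a_j < 0` on `J₋`)
holds for all full circuits iff it holds for all undominated `J`-circuits with
respect to `(J₊, J₋)`. -/
theorem stmt_5 (n : ℕ) (hn : 2 ≤ n) (v : Fin n → ℝ) (hv : StrictMono v)
    (Jp Jm : Finset (Fin n)) (hdisj : Disjoint Jp Jm) (hproper : Jp ∪ Jm ≠ Finset.univ)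
    (a : Fin n → ℝ) (hap : ∀ j ∈ Jp, 0 < a j) (ham : ∀ j ∈ Jm, a j < 0) (α : ℝ) :
    (∀ x : Fin n → ℝ, IsCircuitPt v x → α ≤ ∑ j ∈ Jp ∪ Jm, a j * x j) ↔
    (∀ f : Fin n → Fin n, IsJCircuit (Jp ∪ Jm) f →
      (¬ ∃ g : Fin n → Fin n, IsJCircuit (Jp ∪ Jm) g ∧ Dominates v Jp Jm g f) →
      α ≤ ∑ j ∈ Jp ∪ Jm, a j * v (f j)) := by
  classical
  set J := Jp ∪ Jm with hJdef
  have hJcard : J.card < n := by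
    have h1 : J.card ≤ n := by
      have := Finset.card_le_univ J
      rwa [Fintype.card_fin] at this
    rcases Nat.lt_or_ge J.card n with h | h
    · exact h
    · exfalso
      apply hproper
      apply Finset.eq_univ_of_card
      rw [Fintype.card_fin]; omega
  constructor
  · -- forward: full circuits ⇒ undominated J-circuits
    intro hall f hf _
    obtain ⟨σ, hσ, hσeq⟩ := full_extend hn (n - J.card) (by omega) J f hf (by omega)
    have := hall (fun i => v (σ i)) ⟨σ, hσ, fun i => rfl⟩
    calc α ≤ ∑ j ∈ J, a j * v (σ j) := this
      _ = ∑ j ∈ J, a j * v (f j) :=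
        Finset.sum_congr rfl fun j hj => by rw [hσeq j hj]
  · -- backward: undominated J-circuits ⇒ full circuits
    intro hund x hx
    obtain ⟨σ, hσ, hxeq⟩ := hx
    have hσJ : IsJCircuit J ⇑σ := circuit_restrict hσ hproper
    set L : (Fin n → Fin n) → ℝ := fun g => ∑ j ∈ J, a j * v (g j) with hL
    set S : Finset (Fin n → Fin n) :=
      Finset.univ.filter (fun g => IsJCircuit J g ∧ L g ≤ L ⇑σ) with hS
    have hσS : ⇑σ ∈ S := Finset.mem_filter.2 ⟨Finset.mem_univ _, hσJ, le_rfl⟩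
    set Φ : (Fin n → Fin n) → ℤ :=
      fun g => ∑ j ∈ Jp, ((g j : ℤ)) - ∑ j ∈ Jm, ((g j : ℤ)) with hΦ
    obtain ⟨g, hgS, hgmin⟩ := Finset.exists_min_image S Φ ⟨⇑σ, hσS⟩
    rw [Finset.mem_filter] at hgS
    obtain ⟨-, hgJ, hgL⟩ := hgS
    -- g is undominated
    have hgund : ¬ ∃ h : Fin n → Fin n, IsJCircuit J h ∧ Dominates v Jp Jm h g := by
      rintro ⟨h, hhJ, ⟨j₀, hj₀J, hj₀ne⟩, hdp, hdm⟩
      -- h is in S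
      have hLle : L h ≤ L g := by
        rw [hL]
        apply Finset.sum_le_sum
        intro j hj
        rw [hJdef, Finset.mem_union] at hj
        rcases hj with hj | hj
        · exact mul_le_mul_of_nonneg_left (hdp j hj) (hap j hj).le
        · have := hdm j hj
          nlinarith [ham j hj]
      have hhS : h ∈ S := Finset.mem_filter.2 ⟨Finset.mem_univ _, hhJ, hLle.trans hgL⟩
      -- Φ strictly decreases
      have hple : ∀ j ∈ Jp, (h j : ℤ) ≤ (g j : ℤ) := by
        intro j hj
        exact_mod_cast (hv.le_iff_le.1 (hdp j hj))
      have hmge : ∀ j ∈ Jm, (g j : ℤ) ≤ (h j : ℤ) := by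
        intro j hj
        exact_mod_cast (hv.le_iff_le.1 (hdm j hj))
      have hΦlt : Φ h < Φ g := by
        rcases Finset.mem_union.1 hj₀J with hj₀ | hj₀
        · have hstrict : (h j₀ : ℤ) < (g j₀ : ℤ) := by
            have hle := hple j₀ hj₀
            have : (h j₀ : ℤ) ≠ (g j₀ : ℤ) := fun he => hj₀ne (Fin.ext (by exact_mod_cast he))
            omega
          have h1 : ∑ j ∈ Jp, ((h j : ℤ)) < ∑ j ∈ Jp, ((g j : ℤ)) :=
            Finset.sum_lt_sum hple ⟨j₀, hj₀, hstrict⟩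
          have h2 : ∑ j ∈ Jm, ((g j : ℤ)) ≤ ∑ j ∈ Jm, ((h j : ℤ)) :=
            Finset.sum_le_sum hmge
          rw [hΦ]; dsimp only; omega
        · have hstrict : (g j₀ : ℤ) < (h j₀ : ℤ) := by
            have hle := hmge j₀ hj₀
            have : (h j₀ : ℤ) ≠ (g j₀ : ℤ) := fun he => hj₀ne (Fin.ext (by exact_mod_cast he))
            omega
          have h1 : ∑ j ∈ Jp, ((h j : ℤ)) ≤ ∑ j ∈ Jp, ((g j : ℤ)) :=
            Finset.sum_le_sum hple
          have h2 : ∑ j ∈ Jm, ((g j : ℤ)) < ∑ j ∈ Jm, ((h j : ℤ)) :=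
            Finset.sum_lt_sum hmge ⟨j₀, hj₀, hstrict⟩
          rw [hΦ]; dsimp only; omega
      exact absurd (hgmin h hhS) (not_le.2 hΦlt)
    have hα : α ≤ L g := hund g hgJ hgund
    calc α ≤ L g := hα
      _ ≤ L ⇑σ := hgL
      _ = ∑ j ∈ J, a j * x j :=
        Finset.sum_congr rfl fun j _ => by rw [hxeq j]
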